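/- Let n > 1 and b ∈ ℤⁿ. Consider the free T²-action on S^(2n+1) × S³ ⊂ ℂ^(n+1) × ℂ² given by (t₁,t₂)·(w₁,…,w_(n+1),z₁,z₂) = (t₁t₂^(b₁)w₁, t₁w₂,…, t₁w_(n+1), t₁^a t₂ z₁, t₂ z₂) with ab₁ = 2, b = (b₁,0,…,0), and the action with b' = (b₁,…,b₁) given analogously by (t₁t₂^(b₁)w₁,…,t₁t₂^(b₁)wₙ, t₁w_(n+1), t₁^a t₂ z₁, t₂ z₂). Then the map φ(w₁,…,w_(n+1),z₁,z₂) = (w_(n+1), w₂,…,wₙ, w₁, z₁, z̄₂) is a homeomorphism of S^(2n+1) × S³ satisfying φ(μ(t₁,t₂)·x) = μ'(t₁t₂^(b₁), t₂^(−1))·φ(x) for all (t₁,t₂) ∈ T² and x ∈ S^(2n+1)×S³. -/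

import Mathlib

theorem stmt14 (n : ℕ) (hn : 1 < n) (a b1 : ℤ) (hab : a * b1 = 2)
    (S : Set ((Fin (n + 1) → ℂ) × (Fin 2 → ℂ)))
    (hS : S = {p | (∑ i, Complex.normSq (p.1 i)) = 1 ∧ (∑ j, Complex.normSq (p.2 j)) = 1})
    (φ : ((Fin (n + 1) → ℂ) × (Fin 2 → ℂ)) → ((Fin (n + 1) → ℂ) × (Fin 2 → ℂ)))
    (hφ : ∀ p, φ p =
      (fun i => if i.1 = 0 then p.1 (Fin.last n)
                else if i = Fin.last n then p.1 0 else p.1 i,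
       fun j => if j.1 = 1 then starRingEnd ℂ (p.2 j) else p.2 j))
    (μ μ' : Circle → Circle →
      ((Fin (n + 1) → ℂ) × (Fin 2 → ℂ)) → ((Fin (n + 1) → ℂ) × (Fin 2 → ℂ)))
    (hμ : ∀ t1 t2 p, μ t1 t2 p =
      (fun i => if i.1 = 0 then ((t1 : ℂ) * ((t2 ^ b1 : Circle) : ℂ)) * p.1 i
                else (t1 : ℂ) * p.1 i,
       fun j => if j.1 = 0 then (((t1 ^ a : Circle) : ℂ) * (t2 : ℂ)) * p.2 j
                else (t2 : ℂ) * p.2 j))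
    (hμ' : ∀ t1 t2 p, μ' t1 t2 p =
      (fun i => if i = Fin.last n then (t1 : ℂ) * p.1 i
                else ((t1 : ℂ) * ((t2 ^ b1 : Circle) : ℂ)) * p.1 i,
       fun j => if j.1 = 0 then (((t1 ^ a : Circle) : ℂ) * (t2 : ℂ)) * p.2 j
                else (t2 : ℂ) * p.2 j)) :
    (∃ h : S ≃ₜ S, ∀ x : S, (h x : (Fin (n + 1) → ℂ) × (Fin 2 → ℂ)) = φ x) ∧
    (∀ (t1 t2 : Circle) (x : (Fin (n + 1) → ℂ) × (Fin 2 → ℂ)),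
      φ (μ t1 t2 x) = μ' (t1 * t2 ^ b1) t2⁻¹ (φ x)) := by
  have hnz : n ≠ 0 := by omega
  have hn0 : (0 : Fin (n + 1)) ≠ Fin.last n := by
    simp [Fin.ext_iff, Fin.last]
    omega
  have hlast1 : ¬ ((Fin.last n).1 = 0) := by simpa [Fin.last] using hnz
  -- φ is continuous
  have hφcont : Continuous φ := by
    have : Continuous fun p : ((Fin (n + 1) → ℂ) × (Fin 2 → ℂ)) =>
        ((fun i => if i.1 = 0 then p.1 (Fin.last n)
                else if i = Fin.last n then p.1 0 else p.1 i,
          fun j => if j.1 = 1 then starRingEnd ℂ (p.2 j) else p.2 j) :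
          (Fin (n + 1) → ℂ) × (Fin 2 → ℂ)) := by
      apply Continuous.prodMk
      · apply continuous_pi
        intro i
        split
        · exact (continuous_apply _).comp continuous_fst
        · split
          · exact (continuous_apply _).comp continuous_fst
          · exact (continuous_apply _).comp continuous_fst
      · apply continuous_pi
        intro j
        split
        · exact Complex.continuous_conj.comp ((continuous_apply _).comp continuous_snd)
        · exact (continuous_apply _).comp continuous_snd
    rw [funext hφ]; exact this
  -- φ is an involution
  have hφinv : ∀ p, φ (φ p) = p := by
    intro p
    rw [hφ, hφ]
    refine Prod.ext ?_ ?_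
    · funext i
      simp only
      split
      · next h =>
        have hi : i = 0 := Fin.ext h
        subst hi
        simp
      · next h =>
        split
        · next h2 => subst h2; simp
        · next h2 => simp [h, h2]
    · funext j
      simp only
      split
      · simp
      · rfl
  -- φ maps S to S
  have hφS : ∀ p ∈ S, φ p ∈ S := by
    intro p hp
    rw [hS] at hp ⊢
    obtain ⟨h1, h2⟩ := hp
    constructor
    · rw [hφ]
      have key : ∀ i : Fin (n + 1),
          (if i.1 = 0 then p.1 (Fin.last n) else if i = Fin.last n then p.1 0 else p.1 i)
            = p.1 (Equiv.swap (0 : Fin (n + 1)) (Fin.last n) i) := by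
        intro i
        rcases eq_or_ne i 0 with rfl | hi0
        · simp [Equiv.swap_apply_left]
        · have hi0' : ¬ (i.1 = 0) := fun h => hi0 (Fin.ext h)
          rcases eq_or_ne i (Fin.last n) with rfl | hil
          · simp [hnz, Equiv.swap_apply_right]
          · simp only [hi0', if_false, if_neg hil,
              Equiv.swap_apply_of_ne_of_ne hi0 hil]
      simp only [key]
      rw [← h1]
      exact Fintype.sum_equiv (Equiv.swap (0 : Fin (n + 1)) (Fin.last n)) _ _ (fun i => rfl)
    · rw [hφ]
      simp only
      rw [← h2]
      congr 1
      ext j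
      split <;> simp [Complex.normSq_conj]
  constructor
  · refine ⟨⟨⟨fun x => ⟨φ x, hφS x x.2⟩, fun x => ⟨φ x, hφS x x.2⟩, ?_, ?_⟩, ?_, ?_⟩, fun x => rfl⟩
    · intro x; ext1; simp [hφinv]
    · intro x; ext1; simp [hφinv]
    · exact Continuous.subtype_mk (hφcont.comp continuous_subtype_val) _
    · exact Continuous.subtype_mk (hφcont.comp continuous_subtype_val) _
  · intro t1 t2 x
    have ht : ((t1 * t2 ^ b1 : Circle) : ℂ) * (((t2⁻¹) ^ b1 : Circle) : ℂ) = (t1 : ℂ) := by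
      rw [← Circle.coe_mul]
      congr 1
      group
      all_goals rfl
    have ht2 : (((t1 * t2 ^ b1) ^ a : Circle) : ℂ) * ((t2⁻¹ : Circle) : ℂ)
        = ((t1 ^ a : Circle) : ℂ) * (t2 : ℂ) := by
      rw [← Circle.coe_mul, ← Circle.coe_mul]
      congr 1
      rw [mul_zpow, ← zpow_mul, mul_comm b1 a, hab]
      group
      all_goals rfl
    rw [hμ, hμ', hφ, hφ]
    refine Prod.ext ?_ ?_
    · funext i
      simp only
      rcases eq_or_ne i (Fin.last n) with rfl | hil
      · simp [hnz, Circle.coe_mul]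
      · split
        · next hi0 =>
          rw [ht]
        · next hi0 =>
          rw [ht]
    · funext j
      simp only
      fin_cases j
      · norm_num
        exact Or.inl (by have h := ht2; push_cast at h; rw [h])
      · norm_num
        exact Or.inl (by rw [← Circle.coe_inv_eq_conj, Circle.coe_inv])
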